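/- Let (Ω, P) be a probability space, M and K positive integers, δ ∈ (0,1] and ε ∈ (0, 1/4] real numbers. For each k ∈ {1,…,K}, let X_1^{(k)}, …, X_M^{(k)} : Ω → ℝ be random variables such that for each fixed k the family (X_b^{(k)})_{b=1}^M is independent, 0 ≤ X_b^{(k)} ≤ δ almost surely for all b, k, and ∑_{b=1}^M E[X_b^{(k)}] ≤ 1 − ε for each k. Then for every real ψ ≥ 1: P(there exists k ∈ {1,…,K} with ∑_{b=1}^M X_b^{(k)} ≥ ψ(1+ε)(1−ε)) ≤ K · exp(−ψ ε² / (4δ)). -/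

import Mathlib

open MeasureTheory ProbabilityTheory

lemma log_lb {ε : ℝ} (hε : 0 < ε) (hε4 : ε ≤ 1/4) : ε - ε^2/2 ≤ Real.log (1+ε) := by
  have h := Real.abs_log_sub_add_sum_range_le (x := -ε) (by rw [abs_of_neg (by linarith)]; linarith) 3
  simp only [Finset.sum_range_succ, Finset.sum_range_zero, neg_neg, sub_neg_eq_add] at h
  rw [abs_of_neg (by linarith : -ε < 0)] at h
  have h3 := (abs_le.1 h).1
  have hden : (0:ℝ) < 1 - ε := by linarith
  have h4 : ε^(3+1) / (1-ε) ≤ (4/3) * ε^(3+1) := by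
    rw [div_le_iff₀ hden]; nlinarith [pow_pos hε 4]
  push_cast at h3
  ring_nf at h3 h4 ⊢
  nlinarith [pow_pos hε 3, pow_pos hε 4]

theorem stmt_6 {Ω : Type*} [MeasurableSpace Ω] (P : Measure Ω) [IsProbabilityMeasure P]
    (M K : ℕ) (hM : 0 < M) (hK : 0 < K) (δ ε : ℝ)
    (hδ : 0 < δ) (hδ1 : δ ≤ 1) (hε : 0 < ε) (hε4 : ε ≤ 1 / 4)
    (X : Fin K → Fin M → Ω → ℝ)
    (hXmeas : ∀ k b, Measurable (X k b))
    (hXindep : ∀ k, iIndepFun (X k) P)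
    (hXbound : ∀ k b, ∀ᵐ ω ∂P, 0 ≤ X k b ω ∧ X k b ω ≤ δ)
    (hXexp : ∀ k, ∑ b, ∫ ω, X k b ω ∂P ≤ 1 - ε) :
    ∀ ψ : ℝ, 1 ≤ ψ →
      P {ω | ∃ k, ψ * (1 + ε) * (1 - ε) ≤ ∑ b, X k b ω} ≤
        (K : ENNReal) * ENNReal.ofReal (Real.exp (-(ψ * ε ^ 2) / (4 * δ))) := by
  intro ψ hψ
  have h1ε : (0:ℝ) < 1 + ε := by linarith
  set t : ℝ := Real.log (1 + ε) / δ with ht_def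
  have hlogpos : 0 < Real.log (1 + ε) := Real.log_pos (by linarith)
  have ht : 0 < t := div_pos hlogpos hδ
  have hexp_tδ : Real.exp (t * δ) = 1 + ε := by
    rw [ht_def, div_mul_cancel₀ _ hδ.ne', Real.exp_log h1ε]
  set a : ℝ := ψ * (1 + ε) * (1 - ε) with ha_def
  -- per-k bound
  have hk : ∀ k, P {ω | a ≤ ∑ b, X k b ω} ≤
      ENNReal.ofReal (Real.exp (-(ψ * ε ^ 2) / (4 * δ))) := by
    intro k
    -- integrability of exp(t * X k b)
    have hint : ∀ b, Integrable (fun ω => Real.exp (t * X k b ω)) P := by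
      intro b
      refine ⟨((hXmeas k b).const_mul t).exp.aestronglyMeasurable, ?_⟩
      apply MeasureTheory.HasFiniteIntegral.of_bounded (C := Real.exp (t * δ))
      filter_upwards [hXbound k b] with ω hω
      rw [Real.norm_eq_abs, abs_of_pos (Real.exp_pos _)]
      exact Real.exp_le_exp.2 (by nlinarith [hω.1, hω.2, ht.le])
    have hintX : ∀ b, Integrable (X k b) P := by
      intro b
      refine ⟨(hXmeas k b).aestronglyMeasurable, ?_⟩
      apply MeasureTheory.HasFiniteIntegral.of_bounded (C := δ)
      filter_upwards [hXbound k b] with ω hω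
      rw [Real.norm_eq_abs, abs_of_nonneg hω.1]; exact hω.2
    -- mgf bound per b
    have hmgf_b : ∀ b, mgf (X k b) P t ≤ Real.exp (ε / δ * ∫ ω, X k b ω ∂P) := by
      intro b
      have hpt : ∀ᵐ ω ∂P, Real.exp (t * X k b ω) ≤ 1 + ε / δ * X k b ω := by
        filter_upwards [hXbound k b] with ω hω
        obtain ⟨h0, h1⟩ := hω
        have hc := convexOn_exp.2 (Set.mem_univ (0:ℝ)) (Set.mem_univ (t * δ))
          (show (0:ℝ) ≤ 1 - X k b ω / δ by
            rw [sub_nonneg]; exact div_le_one_of_le₀ h1 hδ.le)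
          (show (0:ℝ) ≤ X k b ω / δ from div_nonneg h0 hδ.le)
          (show 1 - X k b ω / δ + X k b ω / δ = 1 by ring)
        have he : (1 - X k b ω / δ) • (0:ℝ) + (X k b ω / δ) • (t * δ) = t * X k b ω := by
          field_simp; rw [smul_zero, zero_add, smul_eq_mul, ← mul_assoc, div_mul_cancel₀ _ hδ.ne']
        rw [he] at hc
        calc Real.exp (t * X k b ω) ≤ (1 - X k b ω / δ) • Real.exp 0
              + (X k b ω / δ) • Real.exp (t * δ) := hc
          _ = 1 + ε / δ * X k b ω := by
              rw [Real.exp_zero, hexp_tδ]; field_simp; rw [smul_eq_mul, smul_eq_mul, mul_add, ← mul_assoc, ← mul_assoc, mul_div_assoc', mul_div_assoc', mul_div_cancel_left₀ _ hδ.ne', mul_div_cancel_left₀ _ hδ.ne']; ring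
      have hintRHS : Integrable (fun ω => 1 + ε / δ * X k b ω) P :=
        (integrable_const 1).add ((hintX b).const_mul _)
      calc mgf (X k b) P t = ∫ ω, Real.exp (t * X k b ω) ∂P := rfl
        _ ≤ ∫ ω, (1 + ε / δ * X k b ω) ∂P := integral_mono_ae (hint b) hintRHS hpt
        _ = 1 + ε / δ * ∫ ω, X k b ω ∂P := by
            rw [integral_add (integrable_const 1) ((hintX b).const_mul _),
              integral_const, integral_const_mul]
            simp
        _ ≤ Real.exp (ε / δ * ∫ ω, X k b ω ∂P) := by
            rw [add_comm]; exact Real.add_one_le_exp _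
    -- mgf of the sum
    have hsum_eq : (fun ω => ∑ b, X k b ω) = ∑ b, X k b := by
      ext ω; simp [Finset.sum_apply]
    have hmgf_sum : mgf (fun ω => ∑ b, X k b ω) P t ≤ Real.exp (ε / δ * (1 - ε)) := by
      rw [hsum_eq, (hXindep k).mgf_sum (hXmeas k) Finset.univ]
      calc (∏ b, mgf (X k b) P t) ≤ ∏ b, Real.exp (ε / δ * ∫ ω, X k b ω ∂P) :=
            Finset.prod_le_prod (fun b _ => mgf_nonneg) (fun b _ => hmgf_b b)
        _ = Real.exp (∑ b, ε / δ * ∫ ω, X k b ω ∂P) := by rw [Real.exp_sum]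
        _ ≤ Real.exp (ε / δ * (1 - ε)) := by
            apply Real.exp_le_exp.2
            rw [← Finset.mul_sum]
            exact mul_le_mul_of_nonneg_left (hXexp k) (div_nonneg hε.le hδ.le)
    have hint_sum : Integrable (fun ω => Real.exp (t * (fun ω => ∑ b, X k b ω) ω)) P := by
      rw [hsum_eq]
      exact (hXindep k).integrable_exp_mul_sum (fun b => hXmeas k b) (fun b _ => hint b)
    have hmark := measure_ge_le_exp_mul_mgf (X := fun ω => ∑ b, X k b ω) (μ := P)
      (t := t) a ht.le hint_sum
    -- real chain
    have hlog := log_lb hε hε4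
    have hexp_ineq : Real.exp (-t * a) * Real.exp (ε / δ * (1 - ε)) ≤
        Real.exp (-(ψ * ε ^ 2) / (4 * δ)) := by
      rw [← Real.exp_add]
      apply Real.exp_le_exp.2
      have hc : ε * (1 - ε) ≤ ψ * ((1 + ε) * (1 - ε) * Real.log (1 + ε)) - ψ * ε ^ 2 / 4 := by
        have h1 : ψ * ((1 + ε) * (1 - ε) * (ε - ε ^ 2 / 2)) ≤
            ψ * ((1 + ε) * (1 - ε) * Real.log (1 + ε)) := by
          apply mul_le_mul_of_nonneg_left _ (by linarith)
          apply mul_le_mul_of_nonneg_left hlog (by nlinarith)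
        have h2 : 0 ≤ (ψ - 1) * ((1 + ε) * (1 - ε) * (ε - ε ^ 2 / 2) - ε ^ 2 / 4) := by
          apply mul_nonneg (by linarith)
          nlinarith [mul_nonneg (sq_nonneg ε) (show (0:ℝ) ≤ 1/4 - ε + ε^2/2 by nlinarith)]
        have hD : ε * (1 - ε) + ε ^ 2 / 4 ≤ (1 + ε) * (1 - ε) * (ε - ε ^ 2 / 2) := by
          nlinarith [mul_nonneg (sq_nonneg ε) (show (0:ℝ) ≤ 1/4 - ε + ε^2/2 by nlinarith)]
        nlinarith [h1, h2, hD]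
      calc -t * a + ε / δ * (1 - ε)
          = (ε * (1 - ε) - ψ * ((1 + ε) * (1 - ε) * Real.log (1 + ε))) / δ := by
            rw [ht_def, ha_def]; ring
        _ ≤ (-(ψ * ε ^ 2) / 4) / δ := by
            apply (div_le_div_iff_of_pos_right hδ).2
            linarith
        _ = -(ψ * ε ^ 2) / (4 * δ) := by ring
    have hreal : (P {ω | a ≤ ∑ b, X k b ω}).toReal ≤ Real.exp (-(ψ * ε ^ 2) / (4 * δ)) :=
      hmark.trans <| (mul_le_mul_of_nonneg_left hmgf_sum (Real.exp_pos _).le).trans hexp_ineq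
    calc P {ω | a ≤ ∑ b, X k b ω}
        = ENNReal.ofReal (P {ω | a ≤ ∑ b, X k b ω}).toReal :=
          (ENNReal.ofReal_toReal (measure_ne_top _ _)).symm
      _ ≤ ENNReal.ofReal (Real.exp (-(ψ * ε ^ 2) / (4 * δ))) := ENNReal.ofReal_le_ofReal hreal
  -- union bound
  have hset : {ω | ∃ k, a ≤ ∑ b, X k b ω} = ⋃ k, {ω | a ≤ ∑ b, X k b ω} := by
    ext ω; simp
  rw [hset]
  calc P (⋃ k, {ω | a ≤ ∑ b, X k b ω}) ≤ ∑' k, P {ω | a ≤ ∑ b, X k b ω} :=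
        measure_iUnion_le _
    _ = ∑ k, P {ω | a ≤ ∑ b, X k b ω} := tsum_fintype _
    _ ≤ ∑ _k : Fin K, ENNReal.ofReal (Real.exp (-(ψ * ε ^ 2) / (4 * δ))) :=
        Finset.sum_le_sum (fun k _ => hk k)
    _ = (K : ENNReal) * ENNReal.ofReal (Real.exp (-(ψ * ε ^ 2) / (4 * δ))) := by
        rw [Finset.sum_const, Finset.card_univ, Fintype.card_fin, nsmul_eq_mul]
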